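/- Let G be a finite simple undirected graph, let s and t be two distinct vertices of G, and let p ≥ 1 and k ≥ 0 be integers. Suppose that G admits a (p,s,t)-routing with at most k shared edges and that G has a minimal s-t cut of size at most p−1. Then G admits a (p,s,t)-routing with at most k shared edges in which every shared edge belongs to some minimal s-t cut of G of size at most p−1. -/

import Mathlib

/-- The set of edges shared by at least two paths of the routing `P`. -/
def mseSharedEdges {V : Type*} {G : SimpleGraph V} {s t : V} {p : ℕ}
    (P : Fin p → G.Walk s t) : Set (Sym2 V) :=
  {e | ∃ i j : Fin p, i ≠ j ∧ e ∈ (P i).edges ∧ e ∈ (P j).edges}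

/-- `C` is an `s`-`t` cut in `G`: a set of edges of `G` whose deletion disconnects `s` from `t`. -/
def mseIsCut {V : Type*} (G : SimpleGraph V) (s t : V) (C : Set (Sym2 V)) : Prop :=
  C ⊆ G.edgeSet ∧ ¬ (G.deleteEdges C).Reachable s t

/-- `C` is a minimal `s`-`t` cut: no proper subset of `C` is an `s`-`t` cut. -/
def mseIsMinCut {V : Type*} (G : SimpleGraph V) (s t : V) (C : Set (Sym2 V)) : Prop :=
  mseIsCut G s t C ∧ ∀ C' ⊂ C, ¬ mseIsCut G s t C'


open SimpleGraph

section ChainLemmas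

variable {α : Type*}

lemma getLast?_append_cons (l₁ : List α) (x : α) (l₂ : List α) :
    (l₁ ++ x :: l₂).getLast? = (x :: l₂).getLast? := by
  rw [List.getLast?_append]
  cases h : (x :: l₂).getLast? with
  | none => simp at h
  | some y => simp

lemma chain_concat {r : α → α → Prop} {l : List α} {a b c : α}
    (h : List.Chain r a l) (hl : (a :: l).getLast? = some c) (h2 : r c b) :
    List.Chain r a (l ++ [b]) := by
  induction l generalizing a with
  | nil =>
    simp only [List.getLast?_singleton, Option.some.injEq] at hl
    subst hl
    exact List.chain_cons.mpr ⟨h2, List.Chain.nil⟩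
  | cons d l ih =>
    obtain ⟨had, hdl⟩ := List.chain_cons.mp h
    rw [List.getLast?_cons_cons] at hl
    exact List.chain_cons.mpr ⟨had, ih hdl hl⟩

lemma rtg_chain {r : α → α → Prop} {a b : α} (h : Relation.ReflTransGen r a b) :
    ∃ l, List.Chain r a l ∧ (a :: l).getLast? = some b := by
  induction h with
  | refl => exact ⟨[], List.Chain.nil, rfl⟩
  | @tail c d h1 h2 ih =>
    obtain ⟨l, hc, hl⟩ := ih
    exact ⟨l ++ [d], chain_concat hc hl h2, by
      rw [← List.cons_append, List.getLast?_concat]⟩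

lemma not_nodup_split {l : List α} (h : ¬ l.Nodup) :
    ∃ (y : α) (l₁ l₂ l₃ : List α), l = l₁ ++ y :: l₂ ++ y :: l₃ := by
  classical
  rw [List.nodup_iff_count_le_one] at h
  push_neg at h
  obtain ⟨y, hy⟩ := h
  have hmem : y ∈ l := by rw [← List.count_pos_iff]; omega
  obtain ⟨l₁, l₂, rfl⟩ := List.append_of_mem hmem
  have hcnt : 0 < List.count y l₁ + List.count y l₂ := by
    rw [List.count_append, List.count_cons_self] at hy; omega
  rcases Nat.lt_or_ge 0 (List.count y l₁) with h1 | h1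
  · have : y ∈ l₁ := by rw [← List.count_pos_iff]; omega
    obtain ⟨m₁, m₂, rfl⟩ := List.append_of_mem this
    exact ⟨y, m₁, m₂, l₂, by simp⟩
  · have : y ∈ l₂ := by rw [← List.count_pos_iff]; omega
    obtain ⟨m₁, m₂, rfl⟩ := List.append_of_mem this
    exact ⟨y, l₁, m₁, m₂, by simp⟩

lemma exists_nodup_chain_aux {r : α → α → Prop} :
    ∀ (n : ℕ) (l : List α) (a b : α), l.length ≤ n → List.Chain r a l →
      (a :: l).getLast? = some b →
      ∃ l', List.Chain r a l' ∧ (a :: l').getLast? = some b ∧ (a :: l').Nodup := by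
  intro n
  induction n with
  | zero =>
    intro l a b hl hc hlast
    have : l = [] := List.length_eq_zero_iff.mp (Nat.le_zero.mp hl)
    subst this
    exact ⟨[], List.Chain.nil, hlast, by simp⟩
  | succ n ih =>
    intro l a b hl hc hlast
    by_cases hnd : (a :: l).Nodup
    · exact ⟨l, hc, hlast, hnd⟩
    · obtain ⟨y, l₁, l₂, l₃, hsplit⟩ := not_nodup_split hnd
      cases l₁ with
      | nil =>
        simp only [List.nil_append] at hsplit
        obtain ⟨rfl, rfl⟩ : a = y ∧ l = l₂ ++ y :: l₃ := by
          refine ⟨?_, ?_⟩ <;> injection hsplit with h1 h2 <;> simp [h1, h2]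
        have hc3 : List.Chain r a l₃ := (List.isChain_cons_split.mp hc).2
        have hlast3 : (a :: l₃).getLast? = some b := by
          rw [show a :: (l₂ ++ a :: l₃) = (a :: l₂) ++ (a :: l₃) by simp,
            getLast?_append_cons] at hlast
          exact hlast
        exact ih l₃ a b (by simp at hl ⊢; omega) hc3 hlast3
      | cons c l₁ =>
        obtain ⟨rfl, rfl⟩ : a = c ∧ l = l₁ ++ y :: l₂ ++ y :: l₃ := by
          refine ⟨?_, ?_⟩ <;> injection hsplit with h1 h2 <;> simp [h1, h2]
        have hc0 : List.Chain r a (l₁ ++ y :: (l₂ ++ y :: l₃)) := by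
          rwa [List.append_assoc, List.cons_append] at hc
        have hc' := (List.isChain_cons_split (l₁ := l₁) (c := y) (l₂ := l₂ ++ y :: l₃)).mp hc0
        have hc2 := (List.isChain_cons_split (l₁ := l₂) (c := y) (l₂ := l₃)).mp hc'.2
        have hcnew : List.Chain r a (l₁ ++ y :: l₃) :=
          List.isChain_cons_split.mpr ⟨hc'.1, hc2.2⟩
        have hlastnew : (a :: (l₁ ++ y :: l₃)).getLast? = some b := by
          rw [show a :: (l₁ ++ y :: l₃) = (a :: l₁) ++ (y :: l₃) by simp,
            getLast?_append_cons]
          rw [show a :: (l₁ ++ y :: l₂ ++ y :: l₃) = (a :: l₁ ++ y :: l₂) ++ (y :: l₃) by simp,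
            getLast?_append_cons] at hlast
          exact hlast
        exact ih _ a b (by simp at hl ⊢; omega) hcnew hlastnew

lemma exists_nodup_chain {r : α → α → Prop} {a b : α} (h : Relation.ReflTransGen r a b) :
    ∃ l, List.Chain r a l ∧ (a :: l).getLast? = some b ∧ (a :: l).Nodup := by
  obtain ⟨l, hc, hl⟩ := rtg_chain h
  exact exists_nodup_chain_aux l.length l a b le_rfl hc hl

lemma chain_imp_mem {R S : α → α → Prop} :
    ∀ {l : List α} {c : α}, (∀ x y, x ∈ c :: l → y ∈ l → R x y → S x y) →
      List.Chain R c l → List.Chain S c l := by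
  intro l
  induction l with
  | nil => intro c _ _; exact List.Chain.nil
  | cons d l ih =>
    intro c h hc
    obtain ⟨hcd, hdl⟩ := List.chain_cons.mp hc
    refine List.chain_cons.mpr ⟨h c d (by simp) (by simp) hcd, ih ?_ hdl⟩
    intro x y hx hy
    exact h x y (by simp only [List.mem_cons] at hx ⊢; tauto) (by simp [hy])

end ChainLemmas

section FlowDefs

variable {V : Type*} [Fintype V] [DecidableEq V]

/-- divergence (net outflow) of `f` at `v`, as an integer. -/
def mseDvg (f : V → V → ℕ) (v : V) : ℤ := (∑ u, (f v u : ℤ)) - ∑ u, (f u v : ℤ)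

def mseGoodFun (G : SimpleGraph V) (T : Set (Sym2 V)) (f : V → V → ℕ) : Prop :=
  (∀ u v, f u v ≠ 0 → G.Adj u v) ∧ ∀ u v, s(u, v) ∉ T → f u v + f v u ≤ 1

def mseIsFlow (G : SimpleGraph V) (T : Set (Sym2 V)) (s t : V) (q : ℕ)
    (f : V → V → ℕ) : Prop :=
  mseGoodFun G T f ∧ (∀ v, v ≠ s → v ≠ t → mseDvg f v = 0) ∧ mseDvg f s = q

lemma sum_mseDvg (f : V → V → ℕ) (R : Finset V) :
    ∑ v ∈ R, mseDvg f v = ∑ v ∈ R, ∑ u ∈ Rᶜ, ((f v u : ℤ) - f u v) := by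
  have key : ∀ v, mseDvg f v =
      (∑ u ∈ R, ((f v u : ℤ) - f u v)) + ∑ u ∈ Rᶜ, ((f v u : ℤ) - f u v) := by
    intro v
    rw [Finset.sum_add_sum_compl, mseDvg, Finset.sum_sub_distrib]
  have h0 : ∑ v ∈ R, ∑ u ∈ R, ((f v u : ℤ) - f u v) = 0 := by
    simp only [Finset.sum_sub_distrib]
    rw [Finset.sum_comm]
    ring
  rw [Finset.sum_congr rfl fun v _ => key v, Finset.sum_add_distrib, h0, zero_add]

/-- helper: divergence of a pointwise one-arc modification. -/
lemma mseDvg_modify (f g : V → V → ℕ) (a b : V) (c : ℤ)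
    (h : ∀ x y, (g x y : ℤ) = f x y + (if x = a ∧ y = b then c else 0)) (v : V) :
    mseDvg g v = mseDvg f v + (if v = a then c else 0) - (if v = b then c else 0) := by
  have h1 : ∑ u, (g v u : ℤ) = (∑ u, (f v u : ℤ)) + (if v = a then c else 0) := by
    simp only [h, Finset.sum_add_distrib]
    congr 1
    by_cases hv : v = a
    · subst hv
      simp only [true_and]
      simp [Finset.sum_ite_eq']
    · simp [hv]
  have h2 : ∑ u, (g u v : ℤ) = (∑ u, (f u v : ℤ)) + (if v = b then c else 0) := by
    simp only [h, Finset.sum_add_distrib]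
    congr 1
    by_cases hv : v = b
    · subst hv
      simp only [and_true]
      simp [Finset.sum_ite_eq']
    · simp [hv]
  rw [mseDvg, mseDvg, h1, h2]
  ring

/-- The residual relation for augmenting. -/
def mseRes (G : SimpleGraph V) (T : Set (Sym2 V)) (f : V → V → ℕ) (u v : V) : Prop :=
  G.Adj u v ∧ (s(u, v) ∈ T ∨ (f u v = 0 ∧ f v u = 0) ∨ 0 < f v u)

lemma mseRes_congr {G : SimpleGraph V} {T : Set (Sym2 V)} {f g : V → V → ℕ} {x y : V}
    (h1 : g x y = f x y) (h2 : g y x = f y x) (h : mseRes G T f x y) : mseRes G T g x y := by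
  obtain ⟨hadj, h3⟩ := h
  exact ⟨hadj, by rw [h1, h2]; exact h3⟩

def mseStepA (f : V → V → ℕ) (a b : V) : V → V → ℕ := fun x y =>
  if 0 < f b a then (if x = b ∧ y = a then f x y - 1 else f x y)
  else (if x = a ∧ y = b then f x y + 1 else f x y)

lemma mseStepA_pos {f : V → V → ℕ} {a b : V} (hpos : 0 < f b a) (x y : V) :
    mseStepA f a b x y = if x = b ∧ y = a then f x y - 1 else f x y := by
  simp [mseStepA, hpos]

lemma mseStepA_neg {f : V → V → ℕ} {a b : V} (hpos : ¬ 0 < f b a) (x y : V) :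
    mseStepA f a b x y = if x = a ∧ y = b then f x y + 1 else f x y := by
  simp [mseStepA, hpos]

lemma mseStepA_apply_of_ne {f : V → V → ℕ} {a b x y : V}
    (h1 : ¬(x = a ∧ y = b)) (h2 : ¬(x = b ∧ y = a)) :
    mseStepA f a b x y = f x y := by
  unfold mseStepA
  split <;> simp [h1, h2]

lemma mseDvg_stepA (f : V → V → ℕ) (a b v : V) :
    mseDvg (mseStepA f a b) v =
      mseDvg f v + (if v = a then 1 else 0) - (if v = b then 1 else 0) := by
  by_cases hpos : 0 < f b a
  · have key : ∀ x y, ((mseStepA f a b) x y : ℤ) =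
        f x y + (if x = b ∧ y = a then (-1 : ℤ) else 0) := by
      intro x y
      rw [mseStepA_pos hpos]
      by_cases h : x = b ∧ y = a
      · obtain ⟨rfl, rfl⟩ := h
        rw [if_pos ⟨rfl, rfl⟩, if_pos ⟨rfl, rfl⟩]
        omega
      · simp [h]
    rw [mseDvg_modify f (mseStepA f a b) b a (-1) key v]
    by_cases h1 : v = a
    · have h2 : (v = b) = (a = b) := by rw [h1]
      by_cases h3 : a = b <;> simp [h1, h2, h3] <;> ring
    · by_cases h2 : v = b
      · have h4 : ¬ b = a := by rw [← h2]; exact h1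
        simp [h1, h2, h4]
        ring
      · simp [h1, h2]
  · have key : ∀ x y, ((mseStepA f a b) x y : ℤ) =
        f x y + (if x = a ∧ y = b then (1 : ℤ) else 0) := by
      intro x y
      rw [mseStepA_neg hpos]
      by_cases h : x = a ∧ y = b
      · obtain ⟨rfl, rfl⟩ := h
        rw [if_pos ⟨rfl, rfl⟩, if_pos ⟨rfl, rfl⟩]
        omega
      · simp [h]
    rw [mseDvg_modify f (mseStepA f a b) a b 1 key v]

lemma mseGoodFun_stepA {G : SimpleGraph V} {T : Set (Sym2 V)} {f : V → V → ℕ} {a b : V}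
    (hg : mseGoodFun G T f) (h : mseRes G T f a b) : mseGoodFun G T (mseStepA f a b) := by
  obtain ⟨hsupp, hcap⟩ := hg
  by_cases hpos : 0 < f b a
  · constructor
    · intro u v huv
      rw [mseStepA_pos hpos] at huv
      apply hsupp u v
      intro h0
      apply huv
      split <;> omega
    · intro u v hT
      rw [mseStepA_pos hpos, mseStepA_pos hpos]
      have := hcap u v hT
      split <;> split <;> omega
  · constructor
    · intro u v huv
      rw [mseStepA_neg hpos] at huv
      by_cases he : u = a ∧ v = b
      · obtain ⟨rfl, rfl⟩ := he; exact h.1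
      · rw [if_neg he] at huv; exact hsupp u v huv
    · intro u v hT
      rw [mseStepA_neg hpos, mseStepA_neg hpos]
      by_cases hA : (u = a ∧ v = b) ∨ (v = a ∧ u = b)
      · rcases hA with ⟨rfl, rfl⟩ | ⟨rfl, rfl⟩
        · have hne : u ≠ v := h.1.ne
          have hzero : f u v = 0 ∧ f v u = 0 := by
            rcases h.2 with h' | h' | h'
            · exact absurd h' hT
            · exact h'
            · exact absurd h' hpos
          rw [if_pos ⟨rfl, rfl⟩, if_neg (by tauto)]
          omega
        · have hne : v ≠ u := h.1.ne
          have hzero : f v u = 0 ∧ f u v = 0 := by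
            rcases h.2 with h' | h' | h'
            · exact absurd h' (fun hh => hT (by rwa [Sym2.eq_swap] at hh))
            · exact h'
            · exact absurd h' hpos
          rw [if_neg (by tauto), if_pos ⟨rfl, rfl⟩]
          omega
      · push_neg at hA
        rw [if_neg (by tauto), if_neg (by tauto)]
        exact hcap u v hT

def mseAug (f : V → V → ℕ) : V → List V → (V → V → ℕ)
  | _, [] => f
  | a, b :: l => mseAug (mseStepA f a b) b l

lemma mseAug_spec {G : SimpleGraph V} {T : Set (Sym2 V)} :
    ∀ (l : List V) (a : V) (f : V → V → ℕ), mseGoodFun G T f →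
      List.Chain (mseRes G T f) a l → (a :: l).Nodup →
      mseGoodFun G T (mseAug f a l) ∧ ∀ c, (a :: l).getLast? = some c →
        ∀ v, mseDvg (mseAug f a l) v =
          mseDvg f v + (if v = a then 1 else 0) - (if v = c then 1 else 0) := by
  intro l
  induction l with
  | nil =>
    intro a f hg _ _
    refine ⟨hg, fun c hc v => ?_⟩
    simp only [List.getLast?_singleton, Option.some.injEq] at hc
    subst hc
    simp [mseAug]
  | cons b l ih =>
    intro a f hg hchain hnodup
    obtain ⟨hab, hbl⟩ := List.chain_cons.mp hchain
    have hanotin : a ∉ b :: l := (List.nodup_cons.mp hnodup).1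
    have hg' : mseGoodFun G T (mseStepA f a b) := mseGoodFun_stepA hg hab
    have hchain' : List.Chain (mseRes G T (mseStepA f a b)) b l := by
      refine chain_imp_mem (fun x y hx hy hr => ?_) hbl
      have hxa : x ≠ a := fun h => hanotin (h ▸ hx)
      have hya : y ≠ a := fun h => hanotin (h ▸ List.mem_cons_of_mem b hy)
      exact mseRes_congr (mseStepA_apply_of_ne (by tauto) (by tauto))
        (mseStepA_apply_of_ne (by tauto) (by tauto)) hr
    obtain ⟨hgood, hdvg⟩ := ih b (mseStepA f a b) hg' hchain' (List.nodup_cons.mp hnodup).2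
    refine ⟨hgood, fun c hc v => ?_⟩
    rw [List.getLast?_cons_cons] at hc
    rw [show mseAug f a (b :: l) = mseAug (mseStepA f a b) b l from rfl,
      hdvg c hc v, mseDvg_stepA]
    ring

end FlowDefs

section FlowMain

variable {V : Type*} [Fintype V] [DecidableEq V]

lemma mse_flow_succ {G : SimpleGraph V} {T : Set (Sym2 V)} {s t : V} (hst : s ≠ t) (p q : ℕ)
    (hcut : ∀ C, mseIsCut G s t C → (∀ e ∈ C, e ∉ T) → p ≤ C.ncard)
    (hq : q < p) {f : V → V → ℕ} (hf : mseIsFlow G T s t q f) :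
    ∃ f', mseIsFlow G T s t (q + 1) f' := by
  classical
  obtain ⟨hg, hint, hs⟩ := hf
  by_cases hreach : Relation.ReflTransGen (mseRes G T f) s t
  · obtain ⟨l, hchain, hlast, hnodup⟩ := exists_nodup_chain hreach
    obtain ⟨hgood, hdvg⟩ := mseAug_spec l s f hg hchain hnodup
    refine ⟨mseAug f s l, hgood, ?_, ?_⟩
    · intro v hvs hvt
      rw [hdvg t hlast v]
      simp [hvs, hvt, hint v hvs hvt]
    · rw [hdvg t hlast s, hs, if_pos rfl, if_neg hst]
      push_cast
      ring
  · exfalso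
    obtain ⟨R, hR⟩ : ∃ R : Finset V, R = Finset.univ.filter
        (fun v => Relation.ReflTransGen (mseRes G T f) s v) := ⟨_, rfl⟩
    have hsR : s ∈ R := by
      simp only [hR, Finset.mem_filter, Finset.mem_univ, true_and]
      exact Relation.ReflTransGen.refl
    have htR : t ∉ R := by
      simp only [hR, Finset.mem_filter, Finset.mem_univ, true_and]
      exact hreach
    have hstep : ∀ v ∈ R, ∀ u, mseRes G T f v u → u ∈ R := by
      intro v hv u hres
      simp only [hR, Finset.mem_filter, Finset.mem_univ, true_and] at hv ⊢
      exact hv.tail hres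
    have hzero : ∀ v ∈ R, ∀ u ∉ R, f u v = 0 := by
      intro v hv u hu
      by_contra h0
      have hadj : G.Adj v u := (hg.1 u v h0).symm
      exact hu (hstep v hv u ⟨hadj, Or.inr (Or.inr (Nat.pos_of_ne_zero h0))⟩)
    have hcross : ∀ v ∈ R, ∀ u ∉ R, G.Adj v u → s(v, u) ∉ T ∧ 1 ≤ f v u := by
      intro v hv u hu hadj
      have hnres : ¬ mseRes G T f v u := fun h => hu (hstep v hv u h)
      have h1 : s(v, u) ∉ T := fun hh => hnres ⟨hadj, Or.inl hh⟩
      have h2 : ¬(f v u = 0 ∧ f u v = 0) := fun hh => hnres ⟨hadj, Or.inr (Or.inl hh)⟩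
      have h3 := hzero v hv u hu
      exact ⟨h1, by omega⟩
    obtain ⟨K, hK⟩ : ∃ K : Finset (V × V),
        K = (R ×ˢ Rᶜ).filter (fun z => G.Adj z.1 z.2) := ⟨_, rfl⟩
    obtain ⟨Cfin, hC⟩ : ∃ Cfin : Finset (Sym2 V),
        Cfin = K.image (fun z => s(z.1, z.2)) := ⟨_, rfl⟩
    have hmemC : ∀ e ∈ Cfin, ∃ z : V × V, z.1 ∈ R ∧ z.2 ∉ R ∧ G.Adj z.1 z.2 ∧ e = s(z.1, z.2) := by
      intro e he
      rw [hC, Finset.mem_image] at he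
      obtain ⟨z, hz, rfl⟩ := he
      rw [hK, Finset.mem_filter, Finset.mem_product, Finset.mem_compl] at hz
      exact ⟨z, hz.1.1, hz.1.2, hz.2, rfl⟩
    have hmem : ∀ x y : V, x ∈ R → y ∉ R → G.Adj x y → s(x, y) ∈ Cfin := by
      intro x y hx hy hadj
      rw [hC, Finset.mem_image]
      refine ⟨(x, y), ?_, rfl⟩
      rw [hK, Finset.mem_filter, Finset.mem_product, Finset.mem_compl]
      exact ⟨⟨hx, hy⟩, hadj⟩
    have hCcut : mseIsCut G s t ↑Cfin := by
      constructor
      · intro e he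
        obtain ⟨z, _, _, hadj, rfl⟩ := hmemC e (by simpa using he)
        exact hadj
      · rintro ⟨w⟩
        obtain ⟨d, hd, hd1, hd2⟩ := w.exists_boundary_dart (↑R : Set V)
          (by simpa using hsR) (by simpa using htR)
        have hadj' := d.adj
        rw [SimpleGraph.deleteEdges_adj] at hadj'
        exact hadj'.2 (hmem _ _ (by simpa using hd1) (by simpa using hd2) hadj'.1)
    have hCT : ∀ e ∈ (↑Cfin : Set (Sym2 V)), e ∉ T := by
      intro e he
      obtain ⟨z, hz1, hz2, hadj, rfl⟩ := hmemC e (by simpa using he)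
      exact (hcross z.1 hz1 z.2 hz2 hadj).1
    have hple := hcut ↑Cfin hCcut hCT
    rw [Set.ncard_coe_finset] at hple
    have hqsum : (q : ℤ) = ∑ v ∈ R, mseDvg f v := by
      rw [Finset.sum_eq_single_of_mem s hsR]
      · exact hs.symm
      · intro v hv hvs
        exact hint v hvs (fun h => htR (h ▸ hv))
    rw [sum_mseDvg] at hqsum
    have hq2 : (q : ℤ) = ∑ z ∈ R ×ˢ Rᶜ, ((f z.1 z.2 : ℤ) - f z.2 z.1) := by
      rw [hqsum]
      exact (Finset.sum_product' (s := R) (t := Rᶜ)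
        (f := fun v u => ((f v u : ℤ) - (f u v : ℤ)))).symm
    have hterm : ∀ z ∈ R ×ˢ Rᶜ, ((f z.1 z.2 : ℤ) - f z.2 z.1) = (f z.1 z.2 : ℤ) := by
      intro z hz
      rw [Finset.mem_product, Finset.mem_compl] at hz
      rw [hzero z.1 hz.1 z.2 hz.2]
      simp
    rw [Finset.sum_congr rfl hterm] at hq2
    have hsplit : ∑ z ∈ R ×ˢ Rᶜ, (f z.1 z.2 : ℤ) = ∑ z ∈ K, (f z.1 z.2 : ℤ) := by
      rw [hK]
      symm
      apply Finset.sum_filter_of_ne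
      intro z hz h0
      apply hg.1
      intro hzz
      rw [hzz] at h0
      simp at h0
    rw [hsplit] at hq2
    have hcard : (Cfin.card : ℤ) ≤ q := by
      have hc1 : Cfin.card ≤ K.card := by rw [hC]; exact Finset.card_image_le
      have hc2 : (K.card : ℤ) ≤ ∑ z ∈ K, (f z.1 z.2 : ℤ) := by
        rw [Finset.card_eq_sum_ones K]
        push_cast
        apply Finset.sum_le_sum
        intro z hz
        rw [hK, Finset.mem_filter, Finset.mem_product, Finset.mem_compl] at hz
        exact_mod_cast (hcross z.1 hz.1.1 z.2 hz.1.2 hz.2).2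
      rw [← hq2] at hc2
      exact_mod_cast le_trans (Nat.cast_le.mpr hc1) hc2
    omega

lemma mse_flow_exists {G : SimpleGraph V} {T : Set (Sym2 V)} {s t : V} (hst : s ≠ t) (p : ℕ)
    (hcut : ∀ C, mseIsCut G s t C → (∀ e ∈ C, e ∉ T) → p ≤ C.ncard) :
    ∃ f, mseIsFlow G T s t p f := by
  suffices h : ∀ q, q ≤ p → ∃ f, mseIsFlow G T s t q f from h p le_rfl
  intro q
  induction q with
  | zero =>
    intro _
    refine ⟨fun _ _ => 0, ⟨fun u v h => absurd rfl h,
      fun u v _ => by show (0 : ℕ) + 0 ≤ 1; omega⟩,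
      fun v _ _ => by simp [mseDvg], by simp [mseDvg]⟩
  | succ n ih =>
    intro h
    obtain ⟨f, hf⟩ := ih (by omega)
    exact mse_flow_succ hst p n hcut (by omega) hf

lemma mse_exists_pos_chain {G : SimpleGraph V} {T : Set (Sym2 V)} {s t : V} {q : ℕ}
    {f : V → V → ℕ} (hf : mseIsFlow G T s t (q + 1) f) (hst : s ≠ t) :
    ∃ l, List.Chain (fun u v => 0 < f u v) s l ∧ (s :: l).getLast? = some t ∧
      (s :: l).Nodup := by
  classical
  suffices h : Relation.ReflTransGen (fun u v => 0 < f u v) s t from exists_nodup_chain h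
  by_contra hreach
  obtain ⟨R, hR⟩ : ∃ R : Finset V, R = Finset.univ.filter
      (fun v => Relation.ReflTransGen (fun u v => 0 < f u v) s v) := ⟨_, rfl⟩
  have hsR : s ∈ R := by
    simp only [hR, Finset.mem_filter, Finset.mem_univ, true_and]
    exact Relation.ReflTransGen.refl
  have htR : t ∉ R := by
    simp only [hR, Finset.mem_filter, Finset.mem_univ, true_and]
    exact hreach
  have hzero : ∀ v ∈ R, ∀ u ∉ R, f v u = 0 := by
    intro v hv u hu
    by_contra h0
    apply hu
    simp only [hR, Finset.mem_filter, Finset.mem_univ, true_and] at hv ⊢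
    exact hv.tail (Nat.pos_of_ne_zero h0)
  have hqsum : ((q : ℤ) + 1) = ∑ v ∈ R, mseDvg f v := by
    rw [Finset.sum_eq_single_of_mem s hsR]
    · rw [hf.2.2]; push_cast; ring
    · intro v hv hvs
      exact hf.2.1 v hvs (fun h => htR (h ▸ hv))
  rw [sum_mseDvg] at hqsum
  have hq2 : ((q : ℤ) + 1) = ∑ z ∈ R ×ˢ Rᶜ, ((f z.1 z.2 : ℤ) - f z.2 z.1) := by
    rw [hqsum]
    exact (Finset.sum_product' (s := R) (t := Rᶜ)
      (f := fun v u => ((f v u : ℤ) - (f u v : ℤ)))).symm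
  have hle : ∑ z ∈ R ×ˢ Rᶜ, ((f z.1 z.2 : ℤ) - f z.2 z.1) ≤ 0 := by
    apply Finset.sum_nonpos
    intro z hz
    rw [Finset.mem_product, Finset.mem_compl] at hz
    rw [hzero z.1 hz.1 z.2 hz.2]
    omega
  omega

def mseDec1 (f : V → V → ℕ) (a b : V) : V → V → ℕ := fun x y =>
  if x = a ∧ y = b then f x y - 1 else f x y

lemma mseDec1_le (f : V → V → ℕ) (a b x y : V) : mseDec1 f a b x y ≤ f x y := by
  unfold mseDec1
  split <;> omega

lemma mseDec1_apply_of_ne {f : V → V → ℕ} {a b x y : V} (h : ¬(x = a ∧ y = b)) :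
    mseDec1 f a b x y = f x y := by
  simp [mseDec1, h]

def mseDecP (f : V → V → ℕ) : V → List V → (V → V → ℕ)
  | _, [] => f
  | a, b :: l => mseDecP (mseDec1 f a b) b l

lemma mseDecP_le : ∀ (l : List V) (a : V) (f : V → V → ℕ) (x y : V),
    mseDecP f a l x y ≤ f x y := by
  intro l
  induction l with
  | nil => intro a f x y; exact le_rfl
  | cons b l ih =>
    intro a f x y
    exact le_trans (ih b (mseDec1 f a b) x y) (mseDec1_le f a b x y)

lemma mseDvg_dec1 {f : V → V → ℕ} {a b : V} (h : 0 < f a b) (v : V) :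
    mseDvg (mseDec1 f a b) v =
      mseDvg f v - (if v = a then 1 else 0) + (if v = b then 1 else 0) := by
  have key : ∀ x y, ((mseDec1 f a b) x y : ℤ) =
      f x y + (if x = a ∧ y = b then (-1 : ℤ) else 0) := by
    intro x y
    unfold mseDec1
    by_cases hxy : x = a ∧ y = b
    · obtain ⟨rfl, rfl⟩ := hxy
      rw [if_pos ⟨rfl, rfl⟩, if_pos ⟨rfl, rfl⟩]
      omega
    · simp [hxy]
  rw [mseDvg_modify f _ a b (-1) key v]
  by_cases h1 : v = a
  · have h2 : (v = b) = (a = b) := by rw [h1]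
    by_cases h3 : a = b <;> simp [h1, h2, h3] <;> ring
  · by_cases h2 : v = b
    · have h4 : ¬ b = a := by rw [← h2]; exact h1
      simp [h1, h2, h4]
    · simp [h1, h2]

lemma mseGoodFun_decP {G : SimpleGraph V} {T : Set (Sym2 V)} {f : V → V → ℕ}
    (hg : mseGoodFun G T f) (a : V) (l : List V) : mseGoodFun G T (mseDecP f a l) := by
  constructor
  · intro u v huv
    apply hg.1 u v
    intro h0
    have := mseDecP_le l a f u v
    omega
  · intro u v hT
    have h1 := mseDecP_le l a f u v
    have h2 := mseDecP_le l a f v u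
    have := hg.2 u v hT
    omega

lemma mseDecP_spec : ∀ (l : List V) (a : V) (f : V → V → ℕ),
    List.Chain (fun u v => 0 < f u v) a l → (a :: l).Nodup →
    (∀ c, (a :: l).getLast? = some c → ∀ v,
      mseDvg (mseDecP f a l) v =
        mseDvg f v - (if v = a then 1 else 0) + (if v = c then 1 else 0))
    ∧ ∀ x y, (x, y) ∈ (a :: l).zip l → mseDecP f a l x y + 1 ≤ f x y := by
  intro l
  induction l with
  | nil =>
    intro a f _ _
    refine ⟨fun c hc v => ?_, fun x y hxy => by simp at hxy⟩
    simp only [List.getLast?_singleton, Option.some.injEq] at hc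
    subst hc
    simp [mseDecP]
  | cons b l ih =>
    intro a f hchain hnodup
    obtain ⟨hab, hbl⟩ := List.chain_cons.mp hchain
    have hanotin : a ∉ b :: l := (List.nodup_cons.mp hnodup).1
    have hchain' : List.Chain (fun u v => 0 < mseDec1 f a b u v) b l := by
      refine chain_imp_mem (fun x y hx hy hr => ?_) hbl
      have hxa : x ≠ a := fun h => hanotin (h ▸ hx)
      rwa [mseDec1_apply_of_ne (by tauto)]
    obtain ⟨ihdvg, ihuse⟩ := ih b (mseDec1 f a b) hchain' (List.nodup_cons.mp hnodup).2
    constructor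
    · intro c hc v
      rw [List.getLast?_cons_cons] at hc
      rw [show mseDecP f a (b :: l) = mseDecP (mseDec1 f a b) b l from rfl,
        ihdvg c hc v, mseDvg_dec1 hab v]
      ring
    · intro x y hxy
      rw [List.zip_cons_cons, List.mem_cons] at hxy
      rcases hxy with heq | hxy
      · have hx : x = a := by rw [Prod.ext_iff] at heq; exact heq.1
        have hy : y = b := by rw [Prod.ext_iff] at heq; exact heq.2
        have h1 := mseDecP_le l b (mseDec1 f a b) x y
        have h2 : mseDec1 f a b x y = f x y - 1 := by
          unfold mseDec1; rw [if_pos ⟨hx, hy⟩]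
        have hab' : 0 < f x y := by rw [hx, hy]; exact hab
        show mseDecP (mseDec1 f a b) b l x y + 1 ≤ f x y
        omega
      · have h1 := ihuse x y hxy
        have h2 := mseDec1_le f a b x y
        show mseDecP (mseDec1 f a b) b l x y + 1 ≤ f x y
        omega

lemma mse_exists_walk {G : SimpleGraph V} {f : V → V → ℕ}
    (hsupp : ∀ u v, f u v ≠ 0 → G.Adj u v) :
    ∀ (l : List V) (a t : V), List.Chain (fun u v => 0 < f u v) a l →
      (a :: l).getLast? = some t →
      ∃ w : G.Walk a t, w.support = a :: l ∧
        w.darts.map (fun d => d.toProd) = (a :: l).zip l := by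
  intro l
  induction l with
  | nil =>
    intro a t _ hl
    simp only [List.getLast?_singleton, Option.some.injEq] at hl
    subst hl
    exact ⟨SimpleGraph.Walk.nil, by simp, by simp⟩
  | cons b l ih =>
    intro a t hchain hl
    obtain ⟨hab, hbl⟩ := List.chain_cons.mp hchain
    have hadj : G.Adj a b := hsupp a b (by omega)
    rw [List.getLast?_cons_cons] at hl
    obtain ⟨w, hw1, hw2⟩ := ih b t hbl hl
    refine ⟨SimpleGraph.Walk.cons hadj w, by simp [hw1], ?_⟩
    rw [SimpleGraph.Walk.darts_cons, List.map_cons, hw2, List.zip_cons_cons]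

lemma mse_decomp {G : SimpleGraph V} {T : Set (Sym2 V)} {s t : V} (hst : s ≠ t) :
    ∀ (q : ℕ) (f : V → V → ℕ), mseIsFlow G T s t q f →
      ∃ P : Fin q → G.Walk s t, (∀ i, (P i).IsPath) ∧
        ∀ u v : V, s(u, v) ∉ T →
          (Finset.univ.filter fun i => s(u, v) ∈ (P i).edges).card ≤ f u v + f v u := by
  intro q
  induction q with
  | zero =>
    intro f _
    refine ⟨fun i => i.elim0, fun i => i.elim0, fun u v _ => ?_⟩
    have he : (Finset.univ.filter
        fun i : Fin 0 => s(u, v) ∈ ((fun i => i.elim0 : Fin 0 → G.Walk s t) i).edges) = ∅ := by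
      apply Finset.eq_empty_of_forall_notMem
      intro i _
      exact i.elim0
    rw [he, Finset.card_empty]
    exact Nat.zero_le _
  | succ q ih =>
    intro f hf
    obtain ⟨l, hchain, hlast, hnodup⟩ := mse_exists_pos_chain hf hst
    obtain ⟨w, hsup, hdarts⟩ := mse_exists_walk hf.1.1 l s t hchain hlast
    have hwpath : w.IsPath := by rw [SimpleGraph.Walk.isPath_def, hsup]; exact hnodup
    obtain ⟨hdvgspec, husespec⟩ := mseDecP_spec l s f hchain hnodup
    have hflow' : mseIsFlow G T s t q (mseDecP f s l) := by
      refine ⟨mseGoodFun_decP hf.1 s l, ?_, ?_⟩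
      · intro v hvs hvt
        rw [hdvgspec t hlast v]
        simp [hvs, hvt, hf.2.1 v hvs hvt]
      · rw [hdvgspec t hlast s, hf.2.2, if_pos rfl, if_neg hst]
        push_cast
        ring
    obtain ⟨P', hP'path, hP'cnt⟩ := ih (mseDecP f s l) hflow'
    refine ⟨Fin.cons w P', ?_, ?_⟩
    · intro i
      refine Fin.cases ?_ ?_ i
      · simpa using hwpath
      · intro j
        simpa using hP'path j
    · intro u v hT
      have hcard : (Finset.univ.filter
            fun i : Fin (q + 1) => s(u, v) ∈ ((Fin.cons w P' : Fin (q+1) → G.Walk s t) i).edges).card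
          = (if s(u, v) ∈ w.edges then 1 else 0)
            + (Finset.univ.filter fun i : Fin q => s(u, v) ∈ (P' i).edges).card := by
        rw [Finset.card_filter, Fin.sum_univ_succ, Finset.card_filter]
        simp
      rw [hcard]
      by_cases hew : s(u, v) ∈ w.edges
      · rw [if_pos hew]
        have : ∃ d ∈ w.darts, d.edge = s(u, v) := by
          have : w.edges = w.darts.map SimpleGraph.Dart.edge := rfl
          rw [this] at hew
          exact List.mem_map.mp hew
        obtain ⟨d, hd, hde⟩ := this
        have hzip : d.toProd ∈ (s :: l).zip l := by
          rw [← hdarts]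
          exact List.mem_map_of_mem hd
        have hpair : d.toProd = (u, v) ∨ d.toProd = (v, u) := by
          have hde' : s(d.toProd.1, d.toProd.2) = s(u, v) := hde
          rw [Sym2.eq_iff] at hde'
          rcases hde' with ⟨h1, h2⟩ | ⟨h1, h2⟩
          · left; exact Prod.ext h1 h2
          · right; exact Prod.ext h1 h2
        have c1 := hP'cnt u v hT
        rcases hpair with hp | hp
        · have huse := husespec u v (by rwa [hp] at hzip)
          have h2 := mseDecP_le l s f v u
          omega
        · have huse := husespec v u (by rwa [hp] at hzip)
          have h2 := mseDecP_le l s f u v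
          omega
      · rw [if_neg hew]
        have c1 := hP'cnt u v hT
        have h2 := mseDecP_le l s f u v
        have h3 := mseDecP_le l s f v u
        omega

lemma mse_routing_of_cuts {G : SimpleGraph V} (T : Set (Sym2 V)) {s t : V} (hst : s ≠ t)
    (p : ℕ) (hcut : ∀ C, mseIsCut G s t C → (∀ e ∈ C, e ∉ T) → p ≤ C.ncard) :
    ∃ P : Fin p → G.Walk s t, (∀ i, (P i).IsPath) ∧ mseSharedEdges P ⊆ T := by
  classical
  obtain ⟨f, hf⟩ := mse_flow_exists hst p hcut
  obtain ⟨P, hPpath, hPcnt⟩ := mse_decomp hst p f hf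
  refine ⟨P, hPpath, ?_⟩
  intro e he
  induction e using Sym2.ind with
  | _ u v =>
    by_contra hT
    obtain ⟨i, j, hij, hi, hj⟩ := he
    have hcnt := hPcnt u v hT
    have hcap := hf.1.2 u v hT
    have h2 : 1 < (Finset.univ.filter fun i => s(u, v) ∈ (P i).edges).card :=
      Finset.one_lt_card.mpr
        ⟨i, by simp [hi], j, by simp [hj], hij⟩
    omega

end FlowMain

section Outer

lemma mse_cut_hits_walk {V : Type*} {G : SimpleGraph V} {s t : V} {C : Set (Sym2 V)}
    (hC : mseIsCut G s t C) (w : G.Walk s t) : ∃ e ∈ w.edges, e ∈ C := by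
  by_contra h
  push_neg at h
  exact hC.2 ⟨w.transfer (G.deleteEdges C) (fun e he => by
    rw [SimpleGraph.edgeSet_deleteEdges]
    exact ⟨w.edges_subset_edgeSet he, h e he⟩)⟩

lemma mse_exists_minCut_subset {V : Type*} [Fintype V] {G : SimpleGraph V} {s t : V}
    {C : Set (Sym2 V)} (hC : mseIsCut G s t C) : ∃ D ⊆ C, mseIsMinCut G s t D := by
  suffices h : ∀ n (C : Set (Sym2 V)), C.ncard ≤ n → mseIsCut G s t C →
      ∃ D ⊆ C, mseIsMinCut G s t D from h C.ncard C le_rfl hC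
  intro n
  induction n with
  | zero =>
    intro C hn hC
    refine ⟨C, subset_rfl, hC, ?_⟩
    intro C' hC' _
    have hC0 : C = ∅ := (Set.ncard_eq_zero (Set.toFinite C)).mp (Nat.le_zero.mp hn)
    rw [hC0] at hC'
    exact hC'.2 (Set.empty_subset C')
  | succ n ih =>
    intro C hn hC
    by_cases hmin : ∀ C' ⊂ C, ¬ mseIsCut G s t C'
    · exact ⟨C, subset_rfl, hC, hmin⟩
    · push_neg at hmin
      obtain ⟨C', hsub, hcut'⟩ := hmin
      have hlt : C'.ncard < C.ncard := Set.ncard_lt_ncard hsub (Set.toFinite C)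
      obtain ⟨D, hD1, hD2⟩ := ih C' (by omega) hcut'
      exact ⟨D, hD1.trans hsub.subset, hD2⟩

end Outer

theorem stmt_3 {V : Type*} [Fintype V] (G : SimpleGraph V) (s t : V) (hst : s ≠ t)
    (p k : ℕ) (hp : 1 ≤ p)
    (hrouting : ∃ P : Fin p → G.Walk s t,
      (∀ i, (P i).IsPath) ∧ (mseSharedEdges P).ncard ≤ k)
    (hmincut : ∃ C : Set (Sym2 V), mseIsMinCut G s t C ∧ C.ncard ≤ p - 1) :
    ∃ P : Fin p → G.Walk s t, (∀ i, (P i).IsPath) ∧ (mseSharedEdges P).ncard ≤ k ∧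
      ∀ e ∈ mseSharedEdges P,
        ∃ C : Set (Sym2 V), mseIsMinCut G s t C ∧ C.ncard ≤ p - 1 ∧ e ∈ C := by
  classical
  obtain ⟨P₀, hP₀, hP₀k⟩ := hrouting
  set Qset : Set ℕ := {m | ∃ P : Fin p → G.Walk s t,
    (∀ i, (P i).IsPath) ∧ (mseSharedEdges P).ncard ≤ m} with hQ
  have hkQ : k ∈ Qset := ⟨P₀, hP₀, hP₀k⟩
  have hQn : sInf Qset ∈ Qset := Nat.sInf_mem ⟨k, hkQ⟩
  have hnk : sInf Qset ≤ k := Nat.sInf_le hkQ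
  obtain ⟨P, hPpath, hPn⟩ := hQn
  refine ⟨P, hPpath, hPn.trans hnk, ?_⟩
  intro e he
  by_contra hbad
  push_neg at hbad
  have hT : ∀ C, mseIsCut G s t C →
      (∀ e' ∈ C, e' ∉ mseSharedEdges P \ {e}) → p ≤ C.ncard := by
    intro C hC hCT
    by_contra hlt
    push_neg at hlt
    obtain ⟨D, hDC, hD⟩ := mse_exists_minCut_subset hC
    have hDfin : D.Finite := Set.toFinite D
    have hDcard : D.ncard ≤ p - 1 := by
      have := Set.ncard_le_ncard hDC (Set.toFinite C)
      omega
    choose g hg1 hg2 using fun i : Fin p => mse_cut_hits_walk hD.1 (P i)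
    have hcardD : hDfin.toFinset.card < p := by
      have := Set.ncard_eq_toFinset_card D hDfin
      omega
    obtain ⟨i, _, j, _, hij, hgij⟩ := Finset.exists_ne_map_eq_of_card_lt_of_maps_to
      (show hDfin.toFinset.card < (Finset.univ : Finset (Fin p)).card by simpa using hcardD)
      (fun i _ => (Set.Finite.mem_toFinset hDfin).mpr (hg2 i))
    have hshared : g i ∈ mseSharedEdges P := ⟨i, j, hij, hg1 i, hgij ▸ hg1 j⟩
    have hnee : g i ≠ e := fun h => hbad D hD hDcard (h ▸ hg2 i)
    exact hCT (g i) (hDC (hg2 i)) ⟨hshared, hnee⟩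
  obtain ⟨P', hP'path, hP'sub⟩ := mse_routing_of_cuts (mseSharedEdges P \ {e}) hst p hT
  have h3 : 1 ≤ (mseSharedEdges P).ncard :=
    (Set.ncard_pos (Set.toFinite _)).mpr ⟨e, he⟩
  have hcard' : (mseSharedEdges P').ncard ≤ sInf Qset - 1 := by
    have h1 : (mseSharedEdges P').ncard ≤ (mseSharedEdges P \ {e}).ncard :=
      Set.ncard_le_ncard hP'sub (Set.toFinite _)
    have h2 : (mseSharedEdges P \ {e}).ncard = (mseSharedEdges P).ncard - 1 :=
      Set.ncard_diff_singleton_of_mem he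
    omega
  have hmem : (sInf Qset - 1) ∈ Qset := ⟨P', hP'path, hcard'⟩
  exact Nat.notMem_of_lt_sInf (by omega : sInf Qset - 1 < sInf Qset) hmem
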